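/- Let P be a puzzle of width k. There exist e ∈ {1,2,3} and distinct rows r1, r2 ∈ P such that r1 and r2 have the value e in exactly the same set of columns if and only if there exist distinct rows r1, r2 ∈ P such that the two-row subpuzzle {r1, r2} is not a strong uniquely solvable puzzle. -/
import Mathlib


/-- Exactly two of the three propositions hold. -/
def ExactlyTwo (A B C : Prop) : Prop :=
  (A ∧ B ∧ ¬C) ∨ (A ∧ ¬B ∧ C) ∨ (¬A ∧ B ∧ C)

/-- At least two of the three propositions hold. -/
def AtLeastTwo (A B C : Prop) : Prop :=
  (A ∧ B) ∨ (A ∧ C) ∨ (B ∧ C)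

/-- A puzzle of width `k` is a finite set of rows in `{1,2,3}^k`; we use the
alphabet `Fin 3` whose three elements are denoted `1`, `2`, `3` (`3 = 0`).
`P` is a strong uniquely solvable puzzle (strong USP). -/
def IsSUSP {k : ℕ} (P : Finset (Fin k → Fin 3)) : Prop :=
  ∀ π₁ π₂ π₃ : Equiv.Perm {r // r ∈ P},
    (π₁ = π₂ ∧ π₂ = π₃) ∨
    ∃ (r : {r // r ∈ P}) (c : Fin k),
      ExactlyTwo ((π₁ r).1 c = 1) ((π₂ r).1 c = 2) ((π₃ r).1 c = 3)

lemma fwd1 : ∀ x y : Fin 3, (x = 1 ↔ y = 1) → ¬ ExactlyTwo (y = 1) (x = 2) (x = 3) := by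
  unfold ExactlyTwo; decide
lemma fwd2 : ∀ x y : Fin 3, (x = 2 ↔ y = 2) → ¬ ExactlyTwo (x = 1) (y = 2) (x = 3) := by
  unfold ExactlyTwo; decide
lemma fwd3 : ∀ x y : Fin 3, (x = 3 ↔ y = 3) → ¬ ExactlyTwo (x = 1) (x = 2) (y = 3) := by
  unfold ExactlyTwo; decide
lemma rev1 : ∀ x y : Fin 3, ¬ ExactlyTwo (y = 1) (x = 2) (x = 3) →
    ¬ ExactlyTwo (x = 1) (y = 2) (y = 3) → (x = 1 ↔ y = 1) := by
  unfold ExactlyTwo; decide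
lemma rev2 : ∀ x y : Fin 3, ¬ ExactlyTwo (x = 1) (y = 2) (x = 3) →
    ¬ ExactlyTwo (y = 1) (x = 2) (y = 3) → (x = 2 ↔ y = 2) := by
  unfold ExactlyTwo; decide
lemma rev3 : ∀ x y : Fin 3, ¬ ExactlyTwo (x = 1) (x = 2) (y = 3) →
    ¬ ExactlyTwo (y = 1) (y = 2) (x = 3) → (x = 3 ↔ y = 3) := by
  unfold ExactlyTwo; decide

/-- Two rows of `P` share the exact same set of `e`-columns for some symbol
`e ∈ {1,2,3}` iff some two-row subpuzzle of `P` fails to be a strong USP. -/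
theorem repeated_piece_iff_bad_pair {k : ℕ} (P : Finset (Fin k → Fin 3)) :
    (∃ e : Fin 3, (e = 1 ∨ e = 2 ∨ e = 3) ∧
      ∃ r₁ ∈ P, ∃ r₂ ∈ P, r₁ ≠ r₂ ∧ ∀ c : Fin k, (r₁ c = e ↔ r₂ c = e)) ↔
    (∃ r₁ ∈ P, ∃ r₂ ∈ P, r₁ ≠ r₂ ∧
      ¬ IsSUSP ({r₁, r₂} : Finset (Fin k → Fin 3))) := by
  constructor
  · rintro ⟨e, he, r₁, h₁, r₂, h₂, hne, hcol⟩
    refine ⟨r₁, h₁, r₂, h₂, hne, ?_⟩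
    intro hsusp
    have ha : r₁ ∈ ({r₁, r₂} : Finset (Fin k → Fin 3)) := by simp
    have hb : r₂ ∈ ({r₁, r₂} : Finset (Fin k → Fin 3)) := by simp
    let a : {r // r ∈ ({r₁, r₂} : Finset (Fin k → Fin 3))} := ⟨r₁, ha⟩
    let b : {r // r ∈ ({r₁, r₂} : Finset (Fin k → Fin 3))} := ⟨r₂, hb⟩
    have hab : a ≠ b := by
      simp only [a, b, ne_eq, Subtype.mk.injEq]; exact hne
    have hall : ∀ x : {r // r ∈ ({r₁, r₂} : Finset (Fin k → Fin 3))},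
        x = a ∨ x = b := by
      rintro ⟨x, hx⟩
      simp only [Finset.mem_insert, Finset.mem_singleton] at hx
      rcases hx with h | h
      · left; simp [a, h]
      · right; simp [b, h]
    have hσa : Equiv.swap a b a = b := Equiv.swap_apply_left a b
    have hσb : Equiv.swap a b b = a := Equiv.swap_apply_right a b
    have hσ1 : Equiv.swap a b ≠ 1 := fun h => hab (Equiv.swap_eq_one_iff.mp h)
    rcases he with rfl | rfl | rfl
    · rcases hsusp (Equiv.swap a b) 1 1 with ⟨h, -⟩ | ⟨r, c, het⟩
      · exact hσ1 h
      rcases hall r with rfl | rfl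
      · rw [hσa] at het
        exact fwd1 (r₁ c) (r₂ c) (hcol c) (by simpa using het)
      · rw [hσb] at het
        exact fwd1 (r₂ c) (r₁ c) (hcol c).symm (by simpa using het)
    · rcases hsusp 1 (Equiv.swap a b) 1 with ⟨-, h'⟩ | ⟨r, c, het⟩
      · exact hσ1 h'
      rcases hall r with rfl | rfl
      · rw [hσa] at het
        exact fwd2 (r₁ c) (r₂ c) (hcol c) (by simpa using het)
      · rw [hσb] at het
        exact fwd2 (r₂ c) (r₁ c) (hcol c).symm (by simpa using het)
    · rcases hsusp 1 1 (Equiv.swap a b) with ⟨-, h⟩ | ⟨r, c, het⟩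
      · exact hσ1 h.symm
      rcases hall r with rfl | rfl
      · rw [hσa] at het
        exact fwd3 (r₁ c) (r₂ c) (hcol c) (by simpa using het)
      · rw [hσb] at het
        exact fwd3 (r₂ c) (r₁ c) (hcol c).symm (by simpa using het)
  · rintro ⟨r₁, h₁, r₂, h₂, hne, hbad⟩
    rw [IsSUSP] at hbad
    push_neg at hbad
    obtain ⟨π₁, π₂, π₃, hnt, hno⟩ := hbad
    have ha : r₁ ∈ ({r₁, r₂} : Finset (Fin k → Fin 3)) := by simp
    have hb : r₂ ∈ ({r₁, r₂} : Finset (Fin k → Fin 3)) := by simp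
    let a : {r // r ∈ ({r₁, r₂} : Finset (Fin k → Fin 3))} := ⟨r₁, ha⟩
    let b : {r // r ∈ ({r₁, r₂} : Finset (Fin k → Fin 3))} := ⟨r₂, hb⟩
    have hab : a ≠ b := by
      simp only [a, b, ne_eq, Subtype.mk.injEq]; exact hne
    have hall : ∀ x : {r // r ∈ ({r₁, r₂} : Finset (Fin k → Fin 3))},
        x = a ∨ x = b := by
      rintro ⟨x, hx⟩
      simp only [Finset.mem_insert, Finset.mem_singleton] at hx
      rcases hx with h | h
      · left; simp [a, h]
      · right; simp [b, h]
    have hperm : ∀ π : Equiv.Perm {r // r ∈ ({r₁, r₂} : Finset (Fin k → Fin 3))},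
        (π a = a ∧ π b = b) ∨ (π a = b ∧ π b = a) := by
      intro π
      rcases hall (π a) with h1 | h1 <;> rcases hall (π b) with h2 | h2
      · exact absurd (π.injective (h1.trans h2.symm)) hab
      · exact Or.inl ⟨h1, h2⟩
      · exact Or.inr ⟨h1, h2⟩
      · exact absurd (π.injective (h1.trans h2.symm)) hab
    have hext : ∀ π π' : Equiv.Perm {r // r ∈ ({r₁, r₂} : Finset (Fin k → Fin 3))},
        π a = π' a → π b = π' b → π = π' := by
      intro π π' h1 h2
      refine Equiv.ext fun x => ?_
      rcases hall x with rfl | rfl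
      · exact h1
      · exact h2
    have hnoa := fun c => hno a c
    have hnob := fun c => hno b c
    rcases hperm π₁ with ⟨e1a, e1b⟩ | ⟨e1a, e1b⟩ <;>
      rcases hperm π₂ with ⟨e2a, e2b⟩ | ⟨e2a, e2b⟩ <;>
      rcases hperm π₃ with ⟨e3a, e3b⟩ | ⟨e3a, e3b⟩
    · exact absurd (hext π₂ π₃ (e2a.trans e3a.symm) (e2b.trans e3b.symm))
        (hnt (hext π₁ π₂ (e1a.trans e2a.symm) (e1b.trans e2b.symm)))
    · -- I I S : e = 3
      refine ⟨3, Or.inr (Or.inr rfl), r₁, h₁, r₂, h₂, hne, fun c => ?_⟩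
      have H1 := hnoa c; rw [e1a, e2a, e3a] at H1
      have H2 := hnob c; rw [e1b, e2b, e3b] at H2
      exact rev3 (r₁ c) (r₂ c) (by simpa using H1) (by simpa using H2)
    · -- I S I : e = 2
      refine ⟨2, Or.inr (Or.inl rfl), r₁, h₁, r₂, h₂, hne, fun c => ?_⟩
      have H1 := hnoa c; rw [e1a, e2a, e3a] at H1
      have H2 := hnob c; rw [e1b, e2b, e3b] at H2
      exact rev2 (r₁ c) (r₂ c) (by simpa using H1) (by simpa using H2)
    · -- I S S : e = 1
      refine ⟨1, Or.inl rfl, r₁, h₁, r₂, h₂, hne, fun c => ?_⟩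
      have H1 := hnoa c; rw [e1a, e2a, e3a] at H1
      have H2 := hnob c; rw [e1b, e2b, e3b] at H2
      exact rev1 (r₁ c) (r₂ c) (by simpa using H2) (by simpa using H1)
    · -- S I I : e = 1
      refine ⟨1, Or.inl rfl, r₁, h₁, r₂, h₂, hne, fun c => ?_⟩
      have H1 := hnoa c; rw [e1a, e2a, e3a] at H1
      have H2 := hnob c; rw [e1b, e2b, e3b] at H2
      exact rev1 (r₁ c) (r₂ c) (by simpa using H1) (by simpa using H2)
    · -- S I S : e = 2
      refine ⟨2, Or.inr (Or.inl rfl), r₁, h₁, r₂, h₂, hne, fun c => ?_⟩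
      have H1 := hnoa c; rw [e1a, e2a, e3a] at H1
      have H2 := hnob c; rw [e1b, e2b, e3b] at H2
      exact rev2 (r₁ c) (r₂ c) (by simpa using H2) (by simpa using H1)
    · -- S S I : e = 3
      refine ⟨3, Or.inr (Or.inr rfl), r₁, h₁, r₂, h₂, hne, fun c => ?_⟩
      have H1 := hnoa c; rw [e1a, e2a, e3a] at H1
      have H2 := hnob c; rw [e1b, e2b, e3b] at H2
      exact rev3 (r₁ c) (r₂ c) (by simpa using H2) (by simpa using H1)
    · exact absurd (hext π₂ π₃ (e2a.trans e3a.symm) (e2b.trans e3b.symm))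
        (hnt (hext π₁ π₂ (e1a.trans e2a.symm) (e1b.trans e2b.symm)))
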